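/- For every d ≥ 2 and every i in {1,...,d-1}, viewing the resultant R_i = Res(f, H_i(f)) of the generic polynomial f = x^d + a_1 x^{d-1} + ... + a_{d-1}x and its i-th Hasse derivative as a polynomial in Z[a_1,...,a_{d-1}], the coefficient of the monomial a_{d-i}^d in R_i equals (-1)^{d-i} (C(d,i) - 1)^{d-i}. -/

import Mathlib

open Polynomial

/-- The Sylvester matrix of `f` (regarded as having degree `m`) and `g`
(regarded as having degree `n`). -/
def sylvester {R : Type*} [CommRing R] (f g : Polynomial R) (m n : ℕ) :
    Matrix (Fin (m + n)) (Fin (m + n)) R :=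
  Matrix.of fun i j =>
    if (i : ℕ) < n then
      (if (i : ℕ) ≤ j ∧ (j : ℕ) ≤ (i : ℕ) + m then f.coeff (m + i - j) else 0)
    else
      (if (i : ℕ) - n ≤ j ∧ (j : ℕ) ≤ ((i : ℕ) - n) + n then g.coeff (n + ((i : ℕ) - n) - j) else 0)

/-- The resultant of `f` and `g`, regarded as polynomials of degrees `m` and `n`. -/
def res {R : Type*} [CommRing R] (f g : Polynomial R) (m n : ℕ) : R :=
  (_root_.sylvester f g m n).det

/-- The generic monic polynomial `x^d + a_1 x^{d-1} + ⋯ + a_{d-1} x` with zero constant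
term over `ℤ[a_1, …, a_{d-1}]`, where `MvPolynomial.X j` plays the role of `a_j`. -/
noncomputable def genF (d : ℕ) : Polynomial (MvPolynomial ℕ ℤ) :=
  X ^ d + ∑ j ∈ Finset.Icc 1 (d - 1), C (MvPolynomial.X j) * X ^ (d - j)

/-- `R_i = Res(f, H_i(f))`, the resultant of the generic polynomial and its `i`-th Hasse
derivative, regarded as polynomials of degrees `d` and `d - i`. -/
noncomputable def Rres (d i : ℕ) : MvPolynomial ℕ ℤ :=
  res (genF d) (Polynomial.hasseDeriv i (genF d)) d (d - i)

/-! ### Auxiliary machinery -/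

section Band

variable {A : Type*} [CommRing A]

/-- Sparse band matrix abstracting the Sylvester matrix of `x^d + a x^i` and `N x^k + a`. -/
def bandM (a N : A) (d k : ℕ) : Matrix (Fin (d + k)) (Fin (d + k)) A :=
  Matrix.of fun r j =>
    if (j : ℕ) = (r : ℕ) then (if (r : ℕ) < k then 1 else a)
    else if (j : ℕ) = (r : ℕ) + k ∧ (r : ℕ) < k then a
    else if (r : ℕ) = (j : ℕ) + k then N else 0

lemma bandM_det_base (a N : A) (k : ℕ) :
    (bandM a N k k).det = a ^ k * (1 - N) ^ k := by
  have h : (bandM a N k k).submatrix finSumFinEquiv finSumFinEquiv =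
      Matrix.fromBlocks 1 (a • 1) (N • 1) (a • 1) := by
    ext r j
    rcases r with r | r <;> rcases j with j | j <;>
      simp only [Matrix.submatrix_apply, finSumFinEquiv_apply_left,
        finSumFinEquiv_apply_right, bandM, Matrix.of_apply, Fin.coe_castAdd, Fin.coe_natAdd,
        Matrix.fromBlocks_apply₁₁, Matrix.fromBlocks_apply₁₂, Matrix.fromBlocks_apply₂₁,
        Matrix.fromBlocks_apply₂₂, Matrix.smul_apply, Matrix.one_apply, smul_ite, smul_zero,
        smul_eq_mul, mul_one] <;>
      split_ifs <;> first
        | rfl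
        | omega
        | (exfalso; omega)
        | simp_all [Fin.ext_iff]
        | (simp_all [Fin.ext_iff]; omega)
  rw [← Matrix.det_submatrix_equiv_self finSumFinEquiv, h,
    Matrix.det_fromBlocks_one₁₁]
  have : (a • (1 : Matrix (Fin k) (Fin k) A)) - (N • 1) * (a • 1) = (a - N * a) • 1 := by
    rw [Matrix.smul_mul, Matrix.mul_smul, Matrix.one_mul, smul_smul, ← sub_smul]
  rw [this, Matrix.det_smul, Matrix.det_one, mul_one, Fintype.card_fin, ← mul_pow]
  ring_nf

lemma bandM_det (a N : A) (k d : ℕ) (hkd : k ≤ d) :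
    (bandM a N d k).det = a ^ d * (1 - N) ^ k := by
  induction d, hkd using Nat.le_induction with
  | base => exact bandM_det_base a N k
  | succ d hd ih =>
    let e : Fin (d + k) ⊕ Fin 1 ≃ Fin (d + 1 + k) :=
      finSumFinEquiv.trans (finCongr (by omega))
    have h : (bandM a N (d + 1) k).submatrix e e =
        Matrix.fromBlocks (bandM a N d k) 0
          (Matrix.of fun _ j => if (j : ℕ) = d then N else 0) (a • 1) := by
      ext r j
      have he1 : ∀ x : Fin (d + k), ((e (Sum.inl x)) : ℕ) = (x : ℕ) := by
        intro x; simp [e, finCongr, Fin.coe_cast]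
      have he2 : ∀ x : Fin 1, ((e (Sum.inr x)) : ℕ) = d + k := by
        intro x; simp [e, finCongr, Fin.coe_cast]; try omega
      rcases r with r | r <;> rcases j with j | j <;>
        simp only [Matrix.submatrix_apply, he1, he2, bandM, Matrix.of_apply,
          Matrix.fromBlocks_apply₁₁, Matrix.fromBlocks_apply₁₂, Matrix.fromBlocks_apply₂₁,
          Matrix.fromBlocks_apply₂₂, Matrix.smul_apply, Matrix.one_apply, Matrix.zero_apply,
          smul_ite, smul_zero, smul_eq_mul, mul_one] <;>
        split_ifs <;> first
          | rfl
          | omega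
          | (exfalso; omega)
          | simp_all [Fin.ext_iff]
          | (simp_all [Fin.ext_iff]; omega)
    rw [← Matrix.det_submatrix_equiv_self e, h, Matrix.det_fromBlocks_zero₁₂, ih]
    have hD : (a • (1 : Matrix (Fin 1) (Fin 1) A)).det = a := by
      rw [Matrix.det_fin_one]; simp
    rw [hD]; ring

lemma coeff_fgen (a : A) (d i t : ℕ) (hid : i < d) :
    (X ^ d + C a * X ^ i).coeff t = if t = d then 1 else if t = i then a else 0 := by
  rw [coeff_add, coeff_X_pow, coeff_C_mul, coeff_X_pow]
  split_ifs <;> simp_all <;> omega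

lemma coeff_ggen (a N : A) (k t : ℕ) (hk : 1 ≤ k) :
    (C N * X ^ k + C a).coeff t = if t = k then N else if t = 0 then a else 0 := by
  rw [coeff_add, coeff_C_mul, coeff_X_pow, coeff_C]
  split_ifs <;> simp_all <;> omega

lemma sylvester_eq_bandM (a N : A) (d k i : ℕ) (hik : i + k = d) (hk : 1 ≤ k) (hi : 1 ≤ i) :
    _root_.sylvester (X ^ d + C a * X ^ i) (C N * X ^ k + C a) d k = bandM a N d k := by
  ext r j
  simp only [_root_.sylvester, bandM, Matrix.of_apply]
  rcases r with ⟨r, hr⟩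
  rcases j with ⟨j, hj⟩
  simp only []
  by_cases h1 : r < k
  · rw [if_pos h1]
    by_cases h2 : r ≤ j ∧ j ≤ r + d
    · rw [if_pos h2, coeff_fgen a d i _ (by omega)]
      split_ifs <;> first | rfl | omega
    · rw [if_neg h2]
      split_ifs <;> first | rfl | omega
  · rw [if_neg h1]
    by_cases h2 : r - k ≤ j ∧ j ≤ r - k + k
    · rw [if_pos h2, coeff_ggen a N k _ hk]
      split_ifs <;> first | rfl | omega
    · rw [if_neg h2]
      split_ifs <;> first | rfl | omega

end Band

lemma map_hasseDeriv' {R S : Type*} [CommRing R] [CommRing S] (ψ : R →+* S) (i : ℕ)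
    (f : Polynomial R) :
    (hasseDeriv i f).map ψ = hasseDeriv i (f.map ψ) := by
  ext n
  simp [Polynomial.coeff_map, Polynomial.hasseDeriv_coeff]

lemma res_map {R S : Type*} [CommRing R] [CommRing S] (ψ : R →+* S) (f g : Polynomial R)
    (m n : ℕ) : ψ (res f g m n) = res (f.map ψ) (g.map ψ) m n := by
  unfold res
  rw [RingHom.map_det]
  congr 1
  ext r j
  simp only [_root_.sylvester, RingHom.mapMatrix_apply, Matrix.map_apply, Matrix.of_apply,
    apply_ite ψ, map_zero, ← Polynomial.coeff_map]

lemma coeff_aeval_single (v n : ℕ) (p : MvPolynomial ℕ ℤ) :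
    ((MvPolynomial.aeval fun j => if j = v then (Polynomial.X : Polynomial ℤ) else 0) p).coeff n
      = MvPolynomial.coeff (Finsupp.single v n) p := by
  induction p using MvPolynomial.induction_on' with
  | add p q hp hq => simp [map_add, hp, hq]
  | monomial m c =>
    rw [MvPolynomial.aeval_monomial, MvPolynomial.coeff_monomial]
    by_cases hm : m = Finsupp.single v n
    · subst hm
      rw [if_pos rfl, Finsupp.prod_single_index (by simp)]
      simp [Polynomial.coeff_C_mul]
    · rw [if_neg hm]
      by_cases hsup : ∀ j ∈ m.support, j = v
      · have hms : m = Finsupp.single v (m v) := by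
          ext j
          by_cases hj : j = v
          · subst hj; simp
          · simp [Finsupp.single_apply, Ne.symm hj]
            by_contra h
            exact hj (hsup j (Finsupp.mem_support_iff.mpr h))
        have hmv : m v ≠ n := by
          intro h; exact hm (by rw [hms, h])
        rw [hms, Finsupp.prod_single_index (by simp)]
        simp [Polynomial.coeff_C_mul, Polynomial.coeff_X_pow, hmv]
        exact fun h => absurd h.symm hmv
      · push_neg at hsup
        obtain ⟨j, hjs, hjv⟩ := hsup
        have hz : (m.prod fun j e =>
            (if j = v then (Polynomial.X : Polynomial ℤ) else 0) ^ e) = 0 := by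
          rw [Finsupp.prod]
          apply Finset.prod_eq_zero hjs
          rw [if_neg hjv]
          exact zero_pow (Finsupp.mem_support_iff.mp hjs)
        rw [hz, mul_zero, Polynomial.coeff_zero]


/-- The coefficient of `a_{d-i}^d` in the resultant `R_i` is `(-1)^{d-i} (C(d,i) - 1)^{d-i}`. -/
theorem coeff_pure_power_resultant (d i : ℕ) (hd : 2 ≤ d) (hi1 : 1 ≤ i) (hi2 : i ≤ d - 1) :
    MvPolynomial.coeff (Finsupp.single (d - i) d) (Rres d i) =
      (-1) ^ (d - i) * ((d.choose i : ℤ) - 1) ^ (d - i) := by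
  set k := d - i with hk
  have hik : i + k = d := by omega
  have hk1 : 1 ≤ k := by omega
  set ψ : MvPolynomial ℕ ℤ →+* Polynomial ℤ :=
    (MvPolynomial.aeval fun j => if j = k then (Polynomial.X : Polynomial ℤ) else 0).toRingHom
    with hψ
  -- step 1 : coefficient extraction
  have h1 : MvPolynomial.coeff (Finsupp.single k d) (Rres d i) = (ψ (Rres d i)).coeff d :=
    (coeff_aeval_single k d (Rres d i)).symm
  -- genF maps to X^d + C X * X^i
  have hgen : (genF d).map ψ = X ^ d + C Polynomial.X * X ^ i := by
    unfold genF
    rw [Polynomial.map_add, Polynomial.map_pow, Polynomial.map_X]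
    congr 1
    rw [Polynomial.map_sum]
    have hterm : ∀ j, (C (MvPolynomial.X j) * X ^ (d - j)).map ψ =
        C (if j = k then (Polynomial.X : Polynomial ℤ) else 0) * X ^ (d - j) := by
      intro j
      rw [Polynomial.map_mul, Polynomial.map_C, Polynomial.map_pow, Polynomial.map_X]
      congr 2
      simp [hψ]
    have hv : k ∈ Finset.Icc 1 (d - 1) := by
      simp only [Finset.mem_Icc]; omega
    rw [Finset.sum_congr rfl (fun j _ => hterm j), Finset.sum_eq_single_of_mem k hv]
    · rw [if_pos rfl]
      congr 2
      omega
    · intro j _ hj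
      rw [if_neg hj, map_zero, zero_mul]
  -- the Hasse derivative maps to C N * X^k + C X
  have hhd : (hasseDeriv i (genF d)).map ψ =
      C ((d.choose i : ℤ) : Polynomial ℤ) * X ^ k + C Polynomial.X := by
    rw [map_hasseDeriv', hgen, map_add, Polynomial.X_pow_eq_monomial,
      Polynomial.C_mul_X_pow_eq_monomial, Polynomial.hasseDeriv_monomial,
      Polynomial.hasseDeriv_monomial, Nat.choose_self]
    have h1' : i - i = 0 := by omega
    rw [h1']
    congr 1
    · rw [← Polynomial.C_mul_X_pow_eq_monomial]
      congr 1
      · push_cast; ring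
    · rw [Polynomial.monomial_zero_left]
      congr 1
      push_cast; ring
  -- compute the image of the resultant
  have h2 : ψ (Rres d i) =
      (Polynomial.X : Polynomial ℤ) ^ d * (1 - ((d.choose i : ℤ) : Polynomial ℤ)) ^ k := by
    rw [Rres, res_map, hgen, hhd, ← hk]
    rw [res, sylvester_eq_bandM _ _ d k i hik hk1 hi1, bandM_det _ _ k d (by omega)]
  rw [h1, h2]
  have h3 : (Polynomial.X : Polynomial ℤ) ^ d * (1 - ((d.choose i : ℤ) : Polynomial ℤ)) ^ k =
      Polynomial.C ((1 - (d.choose i : ℤ)) ^ k) * Polynomial.X ^ d := by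
    push_cast [map_pow, map_sub, map_one, Polynomial.C_eq_intCast, Polynomial.C_eq_natCast]
    ring
  rw [h3, Polynomial.coeff_C_mul, Polynomial.coeff_X_pow, if_pos rfl, mul_one]
  rw [show (1 : ℤ) - (d.choose i : ℤ) = (-1) * ((d.choose i : ℤ) - 1) by ring, mul_pow]
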